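/- Let f be an orientation-preserving piecewise linear homeomorphism of the circle with rotation number 0. Then f admits a lift f̃ ∈ PL⁺(ℝ) such that f̃ is strongly reversible in PL(ℝ) by an orientation-reversing piecewise linear involution; i.e., there is an involution τ ∈ PL⁻(ℝ) with τ f̃ τ = f̃⁻¹. -/

import Mathlib

open Set Real Filter
open Topology

/-- A function `ℝ → ℝ` is piecewise linear: its set of break points is locally
finite, and off the break points the function is locally affine. -/
def IsPLFun (f : ℝ → ℝ) : Prop :=
  ∃ B : Set ℝ, (∀ r : ℝ, (B ∩ Set.Icc (-r) r).Finite) ∧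
    ∀ x ∉ B, ∃ a b : ℝ, ∀ᶠ y in nhds x, f y = a * y + b

/-- `F : ℝ → ℝ` is a lift of the circle map `f` with degree `k`. -/
def IsLift (f : Circle → Circle) (F : ℝ → ℝ) (k : ℝ) : Prop :=
  (∀ x : ℝ, f (Circle.exp (2 * π * x)) = Circle.exp (2 * π * F x)) ∧
    ∀ x : ℝ, F (x + 1) = F x + k

/-- orientation-preserving piecewise linear homeomorphism of the circle -/
def PLplus (f : Circle ≃ₜ Circle) : Prop :=
  ∃ F : ℝ → ℝ, StrictMono F ∧ IsPLFun F ∧ IsLift f F 1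

/-- orientation-reversing piecewise linear homeomorphism of the circle -/
def PLminus (f : Circle ≃ₜ Circle) : Prop :=
  ∃ F : ℝ → ℝ, StrictAnti F ∧ IsPLFun F ∧ IsLift f F (-1)

/-- piecewise linear homeomorphism of the circle -/
def PLcirc (f : Circle ≃ₜ Circle) : Prop := PLplus f ∨ PLminus f

lemma cont_of_sm_surj {F : ℝ → ℝ} (h1 : StrictMono F) (h2 : Function.Surjective F) :
    Continuous F := (StrictMono.orderIsoOfSurjective F h1 h2).continuous

lemma sm_inv {F G : ℝ → ℝ} (hm : StrictMono F) (h2 : ∀ y, F (G y) = y) : StrictMono G := by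
  intro a b hab
  by_contra h
  have h3 : G b ≤ G a := le_of_not_gt h
  have h4 := hm.monotone h3
  rw [h2, h2] at h4
  linarith

lemma add_int {F : ℝ → ℝ} (hp : ∀ x, F (x + 1) = F x + 1) :
    ∀ (x : ℝ) (k : ℤ), F (x + k) = F x + k := by
  intro x k
  induction k using Int.induction_on with
  | zero => simp
  | succ n ih =>
      push_cast at ih ⊢
      have h : (x + (n + 1) : ℝ) = (x + n) + 1 := by ring
      rw [h, hp, ih]; ring
  | pred n ih =>
      push_cast at ih ⊢
      have h1 := hp (x + (-n - 1))
      have h : (x + (-n - 1) + 1 : ℝ) = x + -(n:ℝ) := by ring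
      rw [h, ih] at h1
      have h2 : (x + (-(n:ℝ) - 1) : ℝ) = x + (-n - 1) := by ring
      rw [h2]
      linarith

lemma exp_2pi_eq {a b : ℝ} (h : Circle.exp (2 * π * a) = Circle.exp (2 * π * b)) :
    ∃ m : ℤ, a = b + m := by
  obtain ⟨m, hm⟩ := Circle.exp_eq_exp.mp h
  refine ⟨m, ?_⟩
  have hπ : (2 * π) ≠ 0 := by positivity
  have : 2 * π * a = 2 * π * (b + m) := by rw [hm]; ring
  exact mul_left_cancel₀ hπ this

lemma lift_continuous {f : Circle → Circle} (hfc : Continuous f) {F : ℝ → ℝ}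
    (hm : StrictMono F) (hl : ∀ x, f (Circle.exp (2 * π * x)) = Circle.exp (2 * π * F x))
    (hp : ∀ x, F (x + 1) = F x + 1) : Continuous F := by
  have hml := hm.monotone
  have hE : Continuous fun u : ℝ => Circle.exp (2 * π * u) :=
    Circle.exp.continuous.comp (continuous_const.mul continuous_id)
  have hG : Continuous fun t : ℝ => f (Circle.exp (2 * π * t)) := hfc.comp hE
  have heq : (fun t : ℝ => Circle.exp (2 * π * F t)) = fun t => f (Circle.exp (2 * π * t)) := by
    funext t; rw [hl]
  have hsub : ∀ x : ℝ, F (x - 1) = F x - 1 := by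
    intro x
    have := add_int hp x (-1)
    push_cast at this
    have h2 : x + (-1 : ℝ) = x - 1 := by ring
    rw [h2] at this
    linarith
  rw [continuous_iff_continuousAt]
  intro x
  -- left limit equals F x
  have hll : Tendsto F (𝓝[<] x) (𝓝 (F x)) := by
    set l := sSup (F '' Iio x) with hl_def
    have htl : Tendsto F (𝓝[<] x) (𝓝 l) := hml.tendsto_nhdsLT x
    have h1 : Tendsto (fun t => Circle.exp (2 * π * F t)) (𝓝[<] x)
        (𝓝 (Circle.exp (2 * π * l))) := (hE.tendsto l).comp htl
    have h2 : Tendsto (fun t => Circle.exp (2 * π * F t)) (𝓝[<] x)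
        (𝓝 (f (Circle.exp (2 * π * x)))) := by
      rw [heq]; exact (hG.tendsto x).mono_left nhdsWithin_le_nhds
    have h3 : Circle.exp (2 * π * l) = Circle.exp (2 * π * F x) := by
      have := tendsto_nhds_unique h1 h2
      rw [hl x] at this; exact this
    obtain ⟨m, hm'⟩ := exp_2pi_eq h3
    have hub : l ≤ F x := by
      apply csSup_le ⟨F (x - 1), mem_image_of_mem _ (by simp : x - 1 ∈ Iio x)⟩
      rintro y ⟨t, ht, rfl⟩
      exact hml (le_of_lt ht)
    have hlb : F x - 1 < l := by
      have h4 : F (x - 2⁻¹) ≤ l :=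
        le_csSup (hml.map_bddAbove bddAbove_Iio)
          (mem_image_of_mem _ (by norm_num : x - 2⁻¹ ∈ Iio x))
      have h5 : F (x - 1) < F (x - 2⁻¹) := hm (by norm_num)
      rw [hsub] at h5
      linarith
    have hm0 : m = 0 := by
      have : (m : ℝ) ≤ 0 := by linarith
      have : (-1 : ℝ) < m := by linarith
      exact_mod_cast le_antisymm (by exact_mod_cast ‹(m:ℝ) ≤ 0›) (by
        have : (-1 : ℤ) < m := by exact_mod_cast ‹(-1:ℝ) < (m:ℝ)›
        omega)
    rw [hm0] at hm'
    push_cast at hm'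
    rw [hl_def] at htl
    rw [show F x = l by linarith]
    exact htl
  have hrl : Tendsto F (𝓝[>] x) (𝓝 (F x)) := by
    set r := sInf (F '' Ioi x) with hr_def
    have htr : Tendsto F (𝓝[>] x) (𝓝 r) := hml.tendsto_nhdsGT x
    have h1 : Tendsto (fun t => Circle.exp (2 * π * F t)) (𝓝[>] x)
        (𝓝 (Circle.exp (2 * π * r))) := (hE.tendsto r).comp htr
    have h2 : Tendsto (fun t => Circle.exp (2 * π * F t)) (𝓝[>] x)
        (𝓝 (f (Circle.exp (2 * π * x)))) := by
      rw [heq]; exact (hG.tendsto x).mono_left nhdsWithin_le_nhds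
    have h3 : Circle.exp (2 * π * r) = Circle.exp (2 * π * F x) := by
      have := tendsto_nhds_unique h1 h2
      rw [hl x] at this; exact this
    obtain ⟨m, hm'⟩ := exp_2pi_eq h3
    have hlb : F x ≤ r := by
      apply le_csInf ⟨F (x + 1), mem_image_of_mem _ (by simp : x + 1 ∈ Ioi x)⟩
      rintro y ⟨t, ht, rfl⟩
      exact hml (le_of_lt ht)
    have hub : r < F x + 1 := by
      have h4 : r ≤ F (x + 2⁻¹) :=
        csInf_le (hml.map_bddBelow bddBelow_Ioi)
          (mem_image_of_mem _ (by norm_num : x + 2⁻¹ ∈ Ioi x))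
      have h5 : F (x + 2⁻¹) < F (x + 1) := hm (by norm_num)
      rw [hp] at h5
      linarith
    have hm0 : m = 0 := by
      have : (0 : ℝ) ≤ m := by linarith
      have : (m : ℝ) < 1 := by linarith
      have l1 : (0 : ℤ) ≤ m := by exact_mod_cast ‹(0:ℝ) ≤ (m:ℝ)›
      have l2 : (m : ℤ) < 1 := by exact_mod_cast ‹(m:ℝ) < 1›
      omega
    rw [hm0] at hm'
    push_cast at hm'
    rw [hr_def] at htr
    rw [show F x = r by linarith]
    exact htr
  have : 𝓝[≤] x = pure x ⊔ 𝓝[<] x := by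
    rw [← Iio_insert, nhdsWithin_insert]
  rw [ContinuousAt, ← nhdsLE_sup_nhdsGT x, this, tendsto_sup, tendsto_sup]
  exact ⟨⟨tendsto_pure_nhds F x, hll⟩, hrl⟩

lemma lift_surjective {F : ℝ → ℝ} (hc : Continuous F)
    (hp : ∀ x, F (x + 1) = F x + 1) : Function.Surjective F := by
  intro y
  set k : ℤ := ⌊y - F 0⌋ with hk_def
  set k' : ℤ := ⌈y - F 0⌉ with hk'_def
  have h1 : F (k : ℝ) = F 0 + k := by
    have := add_int hp 0 k; rwa [zero_add] at this
  have h2 : F (k' : ℝ) = F 0 + k' := by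
    have := add_int hp 0 k'; rwa [zero_add] at this
  have hkk' : (k : ℝ) ≤ (k' : ℝ) := by
    exact_mod_cast Int.floor_le_ceil _
  have hy : y ∈ Icc (F (k : ℝ)) (F (k' : ℝ)) := by
    constructor
    · rw [h1]; have := Int.floor_le (y - F 0); linarith
    · rw [h2]; have := Int.le_ceil (y - F 0); linarith
  obtain ⟨x, _, hx⟩ := intermediate_value_Icc hkk' hc.continuousOn hy
  exact ⟨x, hx⟩

lemma pl_comp {g h : ℝ → ℝ} (hg : IsPLFun g) (hh : IsPLFun h)
    (hhc : Continuous h) (hhi : Function.Injective h) : IsPLFun (fun x => g (h x)) := by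
  obtain ⟨Bg, hBg1, hBg2⟩ := hg
  obtain ⟨Bh, hBh1, hBh2⟩ := hh
  refine ⟨Bh ∪ h ⁻¹' Bg, ?_, ?_⟩
  · intro r
    rw [Set.union_inter_distrib_right]
    apply Set.Finite.union (hBh1 r)
    have hK : IsCompact (h '' Icc (-r) r) := (isCompact_Icc.image hhc)
    obtain ⟨M, hM⟩ := hK.bddAbove
    obtain ⟨m, hm⟩ := hK.bddBelow
    set r' := max M (-m) with hr'
    have hsub : h ⁻¹' Bg ∩ Icc (-r) r ⊆ h ⁻¹' (Bg ∩ Icc (-r') r') := by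
      rintro x ⟨hx1, hx2⟩
      have hmem : h x ∈ h '' Icc (-r) r := mem_image_of_mem _ hx2
      refine ⟨hx1, ?_, ?_⟩
      · have := hm hmem
        have : -r' ≤ m := by rw [hr']; simp only [neg_le]; exact le_max_right _ _
        have := hm hmem
        linarith [hm hmem]
      · exact le_trans (hM hmem) (le_max_left _ _)
    exact Set.Finite.subset ((hBg1 r').preimage (hhi.injOn)) hsub
  · intro x hx
    have hx1 : x ∉ Bh := fun hc => hx (Or.inl hc)
    have hx2 : h x ∉ Bg := fun hc => hx (Or.inr hc)
    obtain ⟨a, b, hab⟩ := hBh2 x hx1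
    obtain ⟨c, d, hcd⟩ := hBg2 (h x) hx2
    refine ⟨c * a, c * b + d, ?_⟩
    have ht : Tendsto h (𝓝 x) (𝓝 (h x)) := hhc.continuousAt
    filter_upwards [hab, ht.eventually hcd] with y h1 h2
    rw [h2, h1]; ring

lemma pl_inv {F G : ℝ → ℝ} (hm : StrictMono F) (h1 : ∀ x, G (F x) = x)
    (h2 : ∀ y, F (G y) = y) (hpl : IsPLFun F) : IsPLFun G := by
  have hGm : StrictMono G := sm_inv hm h2
  have hGs : Function.Surjective G := fun x => ⟨F x, h1 x⟩
  have hGc := cont_of_sm_surj hGm hGs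
  obtain ⟨B, hB1, hB2⟩ := hpl
  refine ⟨F '' B, ?_, ?_⟩
  · intro r
    set r' := max |G (-r)| |G r| with hr'
    have hsub : F '' B ∩ Icc (-r) r ⊆ F '' (B ∩ Icc (-r') r') := by
      rintro y ⟨⟨x, hxB, rfl⟩, hy1, hy2⟩
      refine ⟨x, ⟨hxB, ?_, ?_⟩, rfl⟩
      · have hh := hGm.monotone hy1
        rw [h1] at hh
        have : -r' ≤ G (-r) := by
          rw [hr']
          calc -(max |G (-r)| |G r|) ≤ -|G (-r)| := by
                simp only [neg_le_neg_iff]; exact le_max_left _ _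
            _ ≤ G (-r) := neg_abs_le _
        linarith
      · have hh := hGm.monotone hy2
        rw [h1] at hh
        have : G r ≤ r' := le_trans (le_abs_self _) (le_max_right _ _)
        linarith
    exact Set.Finite.subset ((hB1 r').image F) hsub
  · intro y hy
    have hxB : G y ∉ B := fun hc => hy ⟨G y, hc, h2 y⟩
    obtain ⟨a, b, hab⟩ := hB2 _ hxB
    have ha : a ≠ 0 := by
      intro h0
      rcases Metric.eventually_nhds_iff.mp hab with ⟨ε, hε, hball⟩
      have e1 : F (G y) = a * G y + b := hball (by simp [hε])
      have e2 : F (G y + ε / 2) = a * (G y + ε / 2) + b := by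
        apply hball
        rw [Real.dist_eq]
        rw [show G y + ε / 2 - G y = ε / 2 by ring, abs_of_pos (by linarith)]
        linarith
      have := hm (show G y < G y + ε / 2 by linarith)
      rw [e1, e2, h0] at this
      simp at this
    refine ⟨a⁻¹, -b / a, ?_⟩
    have ht : Tendsto G (𝓝 y) (𝓝 (G y)) := hGc.continuousAt
    filter_upwards [ht.eventually hab] with z hz
    have h3 := h2 z
    rw [hz] at h3
    field_simp
    linarith

lemma pl_affine (a b : ℝ) : IsPLFun (fun x => a * x + b) :=
  ⟨∅, by simp, fun x _ => ⟨a, b, Filter.Eventually.of_forall fun y => rfl⟩⟩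

lemma pl_id : IsPLFun (id : ℝ → ℝ) :=
  ⟨∅, by simp, fun x _ => ⟨1, 0, Filter.Eventually.of_forall fun y => by simp⟩⟩

lemma main_aux {F : ℝ → ℝ} (hm : StrictMono F) (hpl : IsPLFun F)
    (hc : Continuous F) (hp : ∀ x, F (x + 1) = F x + 1) {x₀ : ℝ} (hx₀ : F x₀ = x₀ + 1) :
    ∃ τ : ℝ → ℝ, StrictAnti τ ∧ Function.Bijective τ ∧ IsPLFun τ ∧ (∀ x, τ (τ x) = x) ∧
      (∀ x, F (τ (F (τ x))) = x) ∧ (∀ x, τ (F (τ (F x))) = x) := by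
  have hs : Function.Surjective F := lift_surjective hc hp
  set P : Equiv.Perm ℝ := Equiv.ofBijective F ⟨hm.injective, hs⟩ with hP_def
  have hPcoe : ∀ x, P x = F x := fun x => rfl
  -- powers of P
  have keyN : ∀ n : ℕ, StrictMono ⇑(P ^ n) ∧ IsPLFun ⇑(P ^ n) ∧
      ∀ m : ℤ, (P ^ n) (x₀ + (m : ℝ)) = x₀ + ((m + n : ℤ) : ℝ) := by
    intro n
    induction n with
    | zero =>
      have hc0 : ⇑(P ^ (0 : ℕ)) = id := by ext x; simp
      rw [hc0]
      exact ⟨strictMono_id, pl_id, fun m => by simp⟩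
    | succ n ih =>
      have hcs : ⇑(P ^ (n + 1)) = fun x => (P ^ n) (F x) := by
        ext x; rw [pow_succ, Equiv.Perm.mul_apply]; rfl
      rw [hcs]
      refine ⟨ih.1.comp hm, pl_comp ih.2.1 hpl hc hm.injective, ?_⟩
      intro m
      have h1 : F (x₀ + (m : ℝ)) = x₀ + ((m + 1 : ℤ) : ℝ) := by
        rw [add_int hp x₀ m, hx₀]; push_cast; ring
      show (P ^ n) (F (x₀ + (m : ℝ))) = _
      rw [h1, ih.2.2 (m + 1)]
      push_cast; ring
  have key : ∀ k : ℤ, StrictMono ⇑(P ^ k) ∧ IsPLFun ⇑(P ^ k) ∧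
      ∀ m : ℤ, (P ^ k) (x₀ + (m : ℝ)) = x₀ + ((m + k : ℤ) : ℝ) := by
    intro k
    rcases Int.eq_nat_or_neg k with ⟨n, rfl | rfl⟩
    · rw [zpow_natCast]
      exact ⟨(keyN n).1, (keyN n).2.1, fun m => by rw [(keyN n).2.2 m]⟩
    · have hQ : (P ^ (-(n : ℤ))) = (P ^ n)⁻¹ := by rw [zpow_neg, zpow_natCast]
      rw [hQ]
      obtain ⟨hsm, hpln, hfixn⟩ := keyN n
      have hinv1 : ∀ x, (P ^ n)⁻¹ ((P ^ n) x) = x := fun x => (P ^ n).symm_apply_apply x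
      have hinv2 : ∀ y, (P ^ n) ((P ^ n)⁻¹ y) = y := fun y => (P ^ n).apply_symm_apply y
      refine ⟨sm_inv hsm hinv2, pl_inv hsm hinv1 hinv2 hpln, ?_⟩
      intro m
      apply (P ^ n).injective
      rw [hinv2, hfixn (m + -n)]
      congr 1; push_cast; ring
  have cancel1 : ∀ (k : ℤ) (x : ℝ), (P ^ k) ((P ^ (-k)) x) = x := by
    intro k x
    rw [← Equiv.Perm.mul_apply, ← zpow_add]
    simp
  have cancel2 : ∀ (k : ℤ) (x : ℝ), (P ^ (-k)) ((P ^ k) x) = x := by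
    intro k x
    rw [← Equiv.Perm.mul_apply, ← zpow_add]
    simp
  -- the conjugacy h to the unit translation
  set h : ℝ → ℝ := fun x => (P ^ (-(⌊x - x₀⌋ : ℤ))) x + (⌊x - x₀⌋ : ℤ) with hh_def
  set h' : ℝ → ℝ := fun y => (P ^ (⌊y - x₀⌋ : ℤ)) (y - (⌊y - x₀⌋ : ℤ)) with hh'_def
  -- basic interval facts
  have floor_mem : ∀ x : ℝ, (P ^ (-(⌊x - x₀⌋ : ℤ))) x ∈ Ico x₀ (x₀ + 1) := by
    intro x
    set k : ℤ := ⌊x - x₀⌋ with hk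
    have hb1 : x₀ + (k : ℝ) ≤ x := by
      have := Int.floor_le (x - x₀); rw [← hk] at this; linarith
    have hb2 : x < x₀ + (k : ℝ) + 1 := by
      have := Int.lt_floor_add_one (x - x₀); rw [← hk] at this; linarith
    constructor
    · have h1 := (key (-k)).1.monotone hb1
      rw [(key (-k)).2.2 k] at h1
      simpa using h1
    · have h2 := (key (-k)).1 (show x < x₀ + ((k + 1 : ℤ) : ℝ) by push_cast; linarith)
      rw [(key (-k)).2.2 (k + 1)] at h2
      have : ((k + 1 + -k : ℤ) : ℝ) = 1 := by push_cast; ring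
      rw [this] at h2
      exact h2
  have floor_h : ∀ x : ℝ, ⌊h x - x₀⌋ = ⌊x - x₀⌋ := by
    intro x
    obtain ⟨hb1, hb2⟩ := floor_mem x
    simp only [hh_def]
    rw [Int.floor_eq_iff]
    constructor
    · push_cast; beta_reduce; linarith
    · push_cast; linarith
  have floor_h' : ∀ y : ℝ, ⌊h' y - x₀⌋ = ⌊y - x₀⌋ := by
    intro y
    set k : ℤ := ⌊y - x₀⌋ with hk
    have hb1 : x₀ ≤ y - (k : ℝ) := by
      have := Int.floor_le (y - x₀); rw [← hk] at this; linarith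
    have hb2 : y - (k : ℝ) < x₀ + 1 := by
      have := Int.lt_floor_add_one (y - x₀); rw [← hk] at this; linarith
    have h1 : x₀ + (k : ℝ) ≤ (P ^ (k : ℤ)) (y - (k : ℝ)) := by
      have := (key k).1.monotone (show x₀ + ((0 : ℤ) : ℝ) ≤ y - (k : ℝ) by push_cast; linarith)
      rw [(key k).2.2 0] at this
      simpa using this
    have h2 : (P ^ (k : ℤ)) (y - (k : ℝ)) < x₀ + (k : ℝ) + 1 := by
      have := (key k).1 (show y - (k : ℝ) < x₀ + ((1 : ℤ) : ℝ) by push_cast; linarith)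
      rw [(key k).2.2 1] at this
      have he : ((1 + k : ℤ) : ℝ) = (k : ℝ) + 1 := by push_cast; ring
      rw [he] at this
      linarith
    simp only [hh'_def]
    rw [← hk, Int.floor_eq_iff]
    constructor
    · beta_reduce; linarith
    · beta_reduce; linarith
  have h'h : ∀ x, h' (h x) = x := by
    intro x
    simp only [hh'_def]
    simp only [floor_h x]
    simp only [hh_def]
    simp only [add_sub_cancel_right]
    exact cancel1 _ _
  have hh' : ∀ y, h (h' y) = y := by
    intro y
    simp only [hh_def]
    simp only [floor_h' y]
    simp only [hh'_def]
    beta_reduce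
    rw [cancel2]
    ring
  have hsm : StrictMono h := by
    intro x y hxy
    have hkxy : ⌊x - x₀⌋ ≤ ⌊y - x₀⌋ := Int.floor_le_floor (by linarith)
    rcases eq_or_lt_of_le hkxy with heq | hlt
    · simp only [hh_def]
      simp only [heq]
      have := (key (-(⌊y - x₀⌋ : ℤ))).1 hxy
      exact add_lt_add_left this _
    · have b1 : h x < x₀ + (⌊x - x₀⌋ : ℝ) + 1 := by
        simp only [hh_def]; have := (floor_mem x).2; beta_reduce; linarith
      have b2 : x₀ + (⌊y - x₀⌋ : ℝ) ≤ h y := by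
        simp only [hh_def]; have := (floor_mem y).1; beta_reduce; linarith
      have : (⌊x - x₀⌋ : ℝ) + 1 ≤ (⌊y - x₀⌋ : ℝ) := by exact_mod_cast hlt
      linarith
  have hs' : Function.Surjective h := fun y => ⟨h' y, hh' y⟩
  have hcont : Continuous h := cont_of_sm_surj hsm hs'
  have hsm' : StrictMono h' := sm_inv hsm hh'
  have hF : ∀ x, h (F x) = h x + 1 := by
    intro x
    set k : ℤ := ⌊x - x₀⌋ with hk
    have hb1 : x₀ + (k : ℝ) ≤ x := by
      have := Int.floor_le (x - x₀); rw [← hk] at this; linarith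
    have hb2 : x < x₀ + (k : ℝ) + 1 := by
      have := Int.lt_floor_add_one (x - x₀); rw [← hk] at this; linarith
    have hFk : ⌊F x - x₀⌋ = k + 1 := by
      have e1 : F (x₀ + (k : ℝ)) = x₀ + ((k + 1 : ℤ) : ℝ) := by
        rw [add_int hp x₀ k, hx₀]; push_cast; ring
      have e2 : F (x₀ + (k : ℝ) + 1) = x₀ + ((k + 2 : ℤ) : ℝ) := by
        rw [show x₀ + (k:ℝ) + 1 = (x₀ + (k:ℝ)) + 1 by ring, hp, e1]; push_cast; ring
      have l1 := hm.monotone hb1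
      have l2 := hm hb2
      rw [e1] at l1
      rw [e2] at l2
      rw [Int.floor_eq_iff]
      constructor
      · push_cast at l1 ⊢; linarith
      · push_cast at l2 ⊢; linarith
    have hz : (P ^ (-(k + 1 : ℤ))) (F x) = (P ^ (-k : ℤ)) x := by
      have hmul : (P ^ (-(k + 1) : ℤ)) * (P ^ (1 : ℤ)) = P ^ (-k : ℤ) := by
        rw [← zpow_add]; congr 1; ring
      calc (P ^ (-(k + 1) : ℤ)) (F x) = (P ^ (-(k + 1) : ℤ)) (P x) := by rw [hPcoe]
        _ = ((P ^ (-(k + 1) : ℤ)) * (P ^ (1 : ℤ))) x := by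
              rw [Equiv.Perm.mul_apply, zpow_one]
        _ = (P ^ (-k : ℤ)) x := by rw [hmul]
    simp only [hh_def]
    simp only [hFk]
    rw [hz]
    push_cast; ring
  have hFval : ∀ x, F x = h' (h x + 1) := by
    intro x
    have := hF x
    have h2 : h' (h (F x)) = h' (h x + 1) := by rw [this]
    rw [h'h] at h2
    exact h2
  -- piecewise linearity of h
  have hplk : ∀ k : ℤ, IsPLFun ⇑(P ^ (-k : ℤ)) := fun k => (key (-k)).2.1
  choose Bk hBk1 hBk2 using hplk
  have hplh : IsPLFun h := by
    refine ⟨⋃ k : ℤ, ({x₀ + (k : ℝ)} ∪ (Bk k ∩ Ico (x₀ + (k : ℝ)) (x₀ + (k : ℝ) + 1))), ?_, ?_⟩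
    · intro r
      set K1 : ℤ := ⌊-r - x₀⌋ - 1 with hK1
      set K2 : ℤ := ⌈r - x₀⌉ with hK2
      have hsub : (⋃ k : ℤ, ({x₀ + (k : ℝ)} ∪ (Bk k ∩ Ico (x₀ + (k : ℝ)) (x₀ + (k : ℝ) + 1))))
          ∩ Icc (-r) r ⊆
          ⋃ k ∈ Finset.Icc K1 K2, ({x₀ + (k : ℝ)} ∪ (Bk k ∩ Icc (-r) r)) := by
        rintro x ⟨hx1, hx2⟩
        simp only [Set.mem_iUnion] at hx1
        obtain ⟨k, hk⟩ := hx1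
        have hbound : K1 ≤ k ∧ k ≤ K2 := by
          have hxlb : x₀ + (k : ℝ) ≤ x + 1 ∧ x₀ + (k : ℝ) ≤ x + 0 ∨ True := Or.inr trivial
          rcases hk with hk | ⟨_, hk3, hk4⟩
          · rw [Set.mem_singleton_iff] at hk
            subst hk
            constructor
            · rw [hK1]
              have : (-r : ℝ) - x₀ ≤ (k : ℝ) := by have := hx2.1; linarith
              have h5 : (⌊-r - x₀⌋ : ℝ) ≤ (k : ℝ) := le_trans (Int.floor_le _) this
              have : ⌊-r - x₀⌋ ≤ k := by exact_mod_cast h5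
              omega
            · rw [hK2]
              have : (k : ℝ) ≤ r - x₀ := by have := hx2.2; linarith
              have h5 : (k : ℝ) ≤ (⌈r - x₀⌉ : ℝ) := le_trans this (Int.le_ceil _)
              exact_mod_cast h5
          · constructor
            · rw [hK1]
              have : (-r : ℝ) ≤ x := hx2.1
              have h4 : (k : ℝ) > -r - x₀ - 1 := by linarith [hk4]
              have h5 : (⌊-r - x₀⌋ : ℝ) ≤ -r - x₀ := Int.floor_le _
              have : (⌊-r - x₀⌋ : ℝ) - 1 ≤ (k : ℝ) := by linarith
              exact_mod_cast this
            · rw [hK2]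
              have : x ≤ r := hx2.2
              have h4 : (k : ℝ) ≤ r - x₀ := by linarith [hk3]
              have h5 : (k : ℝ) ≤ (⌈r - x₀⌉ : ℝ) := le_trans h4 (Int.le_ceil _)
              exact_mod_cast h5
        apply Set.mem_biUnion (Finset.mem_Icc.mpr hbound)
        rcases hk with hk | ⟨hk2, _, _⟩
        · exact Or.inl hk
        · exact Or.inr ⟨hk2, hx2⟩
      refine Set.Finite.subset ?_ hsub
      apply Set.Finite.biUnion (Finset.Icc K1 K2).finite_toSet
      intro k _
      exact (Set.finite_singleton _).union ((hBk1 k r).subset (Set.inter_subset_inter_left _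
        (fun a ha => ha)))
    · intro x hx
      simp only [Set.mem_iUnion, not_exists] at hx
      set k : ℤ := ⌊x - x₀⌋ with hk
      have hxk := hx k
      have hb1 : x₀ + (k : ℝ) ≤ x := by
        have := Int.floor_le (x - x₀); rw [← hk] at this; linarith
      have hb2 : x < x₀ + (k : ℝ) + 1 := by
        have := Int.lt_floor_add_one (x - x₀); rw [← hk] at this; linarith
      have hne : x ≠ x₀ + (k : ℝ) := by
        intro hceq
        exact hxk (Or.inl (by rw [Set.mem_singleton_iff, hceq]))
      have hb1' : x₀ + (k : ℝ) < x := lt_of_le_of_ne hb1 (Ne.symm hne)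
      have hnB : x ∉ Bk k := by
        intro hB
        exact hxk (Or.inr ⟨hB, hb1, hb2⟩)
      obtain ⟨a, b, hab⟩ := hBk2 k x hnB
      refine ⟨a, b + (k : ℝ), ?_⟩
      have hmem : Ioo (x₀ + (k : ℝ)) (x₀ + (k : ℝ) + 1) ∈ 𝓝 x := Ioo_mem_nhds hb1' hb2
      filter_upwards [hmem, hab] with y hy1 hy2
      have hyk : ⌊y - x₀⌋ = k := by
        rw [Int.floor_eq_iff]
        constructor
        · have := hy1.1; beta_reduce; linarith
        · have := hy1.2; push_cast; linarith
      simp only [hh_def]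
      simp only [hyk]
      rw [hy2]
      ring
  have hplh' : IsPLFun h' := pl_inv hsm h'h hh' hplh
  have hch' : Continuous h' := cont_of_sm_surj hsm' (fun x => ⟨h x, h'h x⟩)
  -- the involution
  set c : ℝ := 2 * x₀ + 1 with hc_def
  set τ : ℝ → ℝ := fun x => h' (c - h x) with hτ_def
  have e1 : ∀ x, h (τ x) = c - h x := by
    intro x; simp only [hτ_def]; beta_reduce; rw [hh']
  have hττ : ∀ x, τ (τ x) = x := by
    intro x
    simp only [hτ_def]
    beta_reduce
    rw [e1 x]
    rw [show c - (c - h x) = h x by ring, h'h]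
  refine ⟨τ, ?_, Function.Involutive.bijective hττ, ?_, hττ, ?_, ?_⟩
  · intro x y hxy
    simp only [hτ_def]
    beta_reduce
    exact hsm' (by linarith [hsm hxy])
  · -- PL of τ
    have hplg : IsPLFun (fun x : ℝ => c - h x) := by
      have : (fun x : ℝ => c - h x) = fun x => (fun z => (-1) * z + c) (h x) := by
        funext x; ring
      rw [this]
      exact pl_comp (pl_affine (-1) c) hplh hcont hsm.injective
    have hinj : Function.Injective (fun x : ℝ => c - h x) := by
      intro a b hab
      beta_reduce at hab
      exact hsm.injective (by linarith)
    have hcg : Continuous (fun x : ℝ => c - h x) := continuous_const.sub hcont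
    exact pl_comp hplh' hplg hcg hinj
  · -- F (τ (F (τ x))) = x
    intro x
    have s1 : F (τ x) = h' (c - h x + 1) := by rw [hFval (τ x), e1 x]
    have s2 : τ (F (τ x)) = h' (h x - 1) := by
      simp only [hτ_def]
      beta_reduce
      rw [s1, hh']
      congr 1
      ring
    rw [s2, hFval, hh', show h x - 1 + 1 = h x by ring, h'h]
  · -- τ (F (τ (F x))) = x
    intro x
    have s1 : τ (F x) = h' (c - (h x + 1)) := by
      simp only [hτ_def]; beta_reduce; rw [hF x]
    have s2 : F (τ (F x)) = h' (c - h x) := by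
      rw [s1, hFval, hh']
      congr 1
      ring
    rw [s2]
    simp only [hτ_def]
    beta_reduce
    rw [hh', show c - (c - h x) = h x by ring, h'h]

/-- Let `f ∈ PL⁺(S¹)` with rotation number `0` (equivalently, `f` has a fixed
point).  Then `f` admits a lift `F ∈ PL⁺(ℝ)` which is strongly reversible in
`PL(ℝ)` by an orientation-reversing piecewise linear involution `τ`:
`τ F τ = F⁻¹`, expressed inverse-free as `F ∘ τ ∘ F ∘ τ = id = τ ∘ F ∘ τ ∘ F`. -/
theorem lift_strongly_reversible_of_rho_zero (f : Circle ≃ₜ Circle)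
    (hf : PLplus f) (hfix : ∃ z : Circle, f z = z) :
    ∃ F τ : ℝ → ℝ, IsLift f F 1 ∧ StrictMono F ∧ IsPLFun F ∧
      StrictAnti τ ∧ Function.Bijective τ ∧ IsPLFun τ ∧ (∀ x : ℝ, τ (τ x) = x) ∧
      (∀ x : ℝ, F (τ (F (τ x))) = x) ∧ (∀ x : ℝ, τ (F (τ (F x))) = x) := by
  obtain ⟨F₀, hm₀, hpl₀, hlift₀, hper₀⟩ := hf
  have hc₀ : Continuous F₀ := lift_continuous f.continuous hm₀ hlift₀ hper₀
  -- find a point x₀' with F₀ x₀' = x₀' + m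
  obtain ⟨z, hz⟩ := hfix
  set x₀ : ℝ := Complex.arg z / (2 * π) with hx₀_def
  have hπ : (2 * π) ≠ 0 := by positivity
  have hx₀exp : Circle.exp (2 * π * x₀) = z := by
    rw [hx₀_def, mul_div_cancel₀ _ hπ]
    exact Circle.exp_arg z
  have hfixF : ∃ m : ℤ, F₀ x₀ = x₀ + m := by
    apply exp_2pi_eq
    rw [← hlift₀ x₀, hx₀exp, hz]
  obtain ⟨m, hmval⟩ := hfixF
  set c : ℤ := 1 - m with hc_def
  set F : ℝ → ℝ := fun x => F₀ x + (c : ℝ) with hF_def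
  have hmF : StrictMono F := fun a b hab => by
    simp only [hF_def]; exact add_lt_add_left (hm₀ hab) _
  have hplF : IsPLFun F := by
    obtain ⟨B, hB1, hB2⟩ := hpl₀
    refine ⟨B, hB1, fun x hx => ?_⟩
    obtain ⟨a, b, hab⟩ := hB2 x hx
    refine ⟨a, b + (c : ℝ), ?_⟩
    filter_upwards [hab] with y hy
    simp only [hF_def]
    rw [hy]; ring
  have hliftF : IsLift f F 1 := by
    constructor
    · intro x
      rw [hlift₀ x]
      apply Circle.exp_eq_exp.mpr
      exact ⟨-c, by simp only [hF_def]; push_cast; ring⟩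
    · intro x
      simp only [hF_def]
      rw [hper₀ x]; ring
  have hcF : Continuous F := by
    simp only [hF_def]
    exact hc₀.add continuous_const
  have hperF : ∀ x, F (x + 1) = F x + 1 := hliftF.2
  have hfixpt : F x₀ = x₀ + 1 := by
    simp only [hF_def]
    rw [hmval, hc_def]; push_cast; ring
  obtain ⟨τ, h1, h2, h3, h4, h5, h6⟩ := main_aux hmF hplF hcF hperF hfixpt
  exact ⟨F, τ, hliftF, hmF, hplF, h1, h2, h3, h4, h5, h6⟩
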